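/- Let Z₁, Z₂, ... be i.i.d. random variables with |Z_i| ≤ 2, E[Z_i] = 0 and Var(Z_i) = σ². Define V_n = (n/(n−1))·(∑_{i=1}^n Z_i² − (1/n)(∑_{i=1}^n Z_i)²). Then for any n ≥ 2 and δ > 0, with probability at least 1 − δ, V_n ≤ 4nσ² + 8·ln(1/δ). -/

import Mathlib

open MeasureTheory ProbabilityTheory

lemma exp_quarter_le_aux {y : ℝ} (h0 : 0 ≤ y) (h4 : y ≤ 4) :
    Real.exp (4⁻¹ * y) ≤ 1 + (Real.exp 1 - 1) / 4 * y := by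
  have h := convexOn_exp.2 (Set.mem_univ (0:ℝ)) (Set.mem_univ (1:ℝ))
    (show (0:ℝ) ≤ 1 - y/4 by linarith) (show (0:ℝ) ≤ y/4 by linarith)
    (show (1 - y/4) + y/4 = 1 by ring)
  simp only [smul_eq_mul, mul_zero, mul_one, zero_add, Real.exp_zero] at h
  have he : (4:ℝ)⁻¹ * y = y / 4 := by ring
  rw [he]
  nlinarith [h]

theorem stmt6 {Ω : Type*} [MeasurableSpace Ω] (μ : Measure Ω) [IsProbabilityMeasure μ]
    (Z : ℕ → Ω → ℝ) (hmeas : ∀ i, Measurable (Z i))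
    (hindep : iIndepFun Z μ)
    (hident : ∀ i, IdentDistrib (Z i) (Z 0) μ μ)
    (hbdd : ∀ i ω, |Z i ω| ≤ 2) (hmean : μ[Z 0] = 0)
    (n : ℕ) (hn : 2 ≤ n) (δ : ℝ) (hδ : 0 < δ) :
    ENNReal.ofReal (1 - δ) ≤
      μ {ω | ((n : ℝ) / ((n : ℝ) - 1)) *
          ((∑ i ∈ Finset.range n, (Z i ω) ^ 2) -
            (1 / (n : ℝ)) * (∑ i ∈ Finset.range n, Z i ω) ^ 2) ≤
          4 * (n : ℝ) * variance (Z 0) μ + 8 * Real.log (1 / δ)} := by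
  rcases le_or_gt 1 δ with h1δ | h1δ
  · rw [ENNReal.ofReal_eq_zero.mpr (by linarith)]
    exact zero_le
  set σ2 := variance (Z 0) μ with hσ2def
  have hσ2nn : 0 ≤ σ2 := variance_nonneg _ _
  set Y : ℕ → Ω → ℝ := fun i ω => (Z i ω) ^ 2 with hYdef
  have hYmeas : ∀ i, Measurable (Y i) := fun i => (hmeas i).pow_const 2
  have hYindep : iIndepFun Y μ :=
    hindep.comp (fun _ x => x ^ 2) (fun _ => measurable_id.pow_const 2)
  have hYident : ∀ i, IdentDistrib (Y i) (Y 0) μ μ := fun i =>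
    (hident i).comp (measurable_id.pow_const 2)
  have hY0 : ∀ i ω, 0 ≤ Y i ω := fun i ω => sq_nonneg _
  have hY4 : ∀ i ω, Y i ω ≤ 4 := by
    intro i ω
    have := pow_le_pow_left₀ (abs_nonneg (Z i ω)) (hbdd i ω) 2
    rw [sq_abs] at this
    show Z i ω ^ 2 ≤ 4
    nlinarith [this]
  -- variance equals mean of Y 0
  have hmemLp : MemLp (Z 0) 2 μ := by
    refine memLp_of_bounded (a := -2) (b := 2) (ae_of_all μ fun ω => ?_)
      (hmeas 0).aestronglyMeasurable 2
    exact abs_le.mp (hbdd 0 ω)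
  have hσ2 : σ2 = μ[Y 0] := by
    rw [hσ2def, variance_eq_sub hmemLp, hmean]
    simp [hYdef]
  -- integrability facts
  have hYint : ∀ i, Integrable (Y i) μ :=
    fun i => (integrable_const (4:ℝ)).mono' (hYmeas i).aestronglyMeasurable
      (ae_of_all μ fun ω => by rw [Real.norm_eq_abs, abs_of_nonneg (hY0 i ω)]; exact hY4 i ω)
  have hexpint : ∀ i, Integrable (fun ω => Real.exp (4⁻¹ * Y i ω)) μ := by
    intro i
    refine (integrable_const (Real.exp 1)).mono'
      (((hYmeas i).const_mul _).exp).aestronglyMeasurable (ae_of_all μ fun ω => ?_)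
    rw [Real.norm_eq_abs, abs_of_nonneg (Real.exp_nonneg _)]
    exact Real.exp_le_exp.mpr (by nlinarith [hY4 i ω])
  -- mgf bound for single variable
  have hmgf0 : mgf (Y 0) μ 4⁻¹ ≤ Real.exp ((Real.exp 1 - 1) / 4 * σ2) := by
    have h1 : mgf (Y 0) μ 4⁻¹ ≤ ∫ ω, (1 + (Real.exp 1 - 1) / 4 * Y 0 ω) ∂μ := by
      refine integral_mono (hexpint 0) ((integrable_const (1:ℝ)).add ((hYint 0).const_mul _))
        fun ω => ?_
      exact exp_quarter_le_aux (hY0 0 ω) (hY4 0 ω)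
    have h2 : ∫ ω, (1 + (Real.exp 1 - 1) / 4 * Y 0 ω) ∂μ
        = 1 + (Real.exp 1 - 1) / 4 * σ2 := by
      rw [integral_add (integrable_const _) ((hYint 0).const_mul _), integral_const,
        integral_const_mul, hσ2]
      simp
    calc mgf (Y 0) μ 4⁻¹ ≤ 1 + (Real.exp 1 - 1) / 4 * σ2 := h2 ▸ h1
      _ ≤ Real.exp ((Real.exp 1 - 1) / 4 * σ2) := by
          have := Real.add_one_le_exp ((Real.exp 1 - 1) / 4 * σ2)
          linarith
  -- mgf of the sum
  set S : Ω → ℝ := fun ω => ∑ i ∈ Finset.range n, Y i ω with hSdef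
  have hSsum : S = ∑ i ∈ Finset.range n, Y i := by
    funext ω; simp [hSdef]
  have hSmeas : Measurable S := by
    exact Finset.measurable_sum _ fun i _ => hYmeas i
  have hmgfS : mgf S μ 4⁻¹ ≤ Real.exp ((n:ℝ) * ((Real.exp 1 - 1) / 4 * σ2)) := by
    rw [hSsum, hYindep.mgf_sum hYmeas]
    have heach : ∀ i, mgf (Y i) μ 4⁻¹ = mgf (Y 0) μ 4⁻¹ := by
      intro i
      exact ((hYident i).comp (Real.measurable_exp.comp (measurable_const_mul _))).integral_eq
    calc ∏ i ∈ Finset.range n, mgf (Y i) μ 4⁻¹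
        = (mgf (Y 0) μ 4⁻¹) ^ n := by
          rw [Finset.prod_congr rfl fun i _ => heach i, Finset.prod_const,
            Finset.card_range]
      _ ≤ (Real.exp ((Real.exp 1 - 1) / 4 * σ2)) ^ n :=
          pow_le_pow_left₀ mgf_nonneg hmgf0 n
      _ = Real.exp ((n:ℝ) * ((Real.exp 1 - 1) / 4 * σ2)) := by
          rw [← Real.exp_nat_mul]
  -- Chernoff bound
  set t : ℝ := 2 * (n:ℝ) * σ2 + 4 * Real.log (1 / δ) with htdef
  have hlogpos : 0 < Real.log (1 / δ) := Real.log_pos (by rw [lt_div_iff₀ hδ]; linarith)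
  have hSexpint : Integrable (fun ω => Real.exp (4⁻¹ * S ω)) μ := by
    refine (integrable_const (Real.exp (n:ℝ))).mono'
      ((hSmeas.const_mul _).exp).aestronglyMeasurable (ae_of_all μ fun ω => ?_)
    rw [Real.norm_eq_abs, abs_of_nonneg (Real.exp_nonneg _)]
    refine Real.exp_le_exp.mpr ?_
    have hS4n : S ω ≤ 4 * n := by
      calc S ω ≤ ∑ i ∈ Finset.range n, (4:ℝ) :=
            Finset.sum_le_sum fun i _ => hY4 i ω
        _ = 4 * n := by simp [mul_comm]
    linarith
  have hcher : (μ {ω | t ≤ S ω}).toReal ≤ δ := by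
    have h := measure_ge_le_exp_mul_mgf (X := S) (μ := μ) (t := 4⁻¹) t (by norm_num) hSexpint
    refine h.trans ?_
    calc Real.exp (-4⁻¹ * t) * mgf S μ 4⁻¹
        ≤ Real.exp (-4⁻¹ * t) * Real.exp ((n:ℝ) * ((Real.exp 1 - 1) / 4 * σ2)) := by
          exact mul_le_mul_of_nonneg_left hmgfS (Real.exp_nonneg _)
      _ = Real.exp ((n:ℝ) * ((Real.exp 1 - 1) / 4 * σ2) + -4⁻¹ * t) := by
          rw [← Real.exp_add]; ring_nf
      _ ≤ Real.exp (Real.log δ) := by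
          refine Real.exp_le_exp.mpr ?_
          have he : Real.exp 1 < 3 := by
            have := Real.exp_one_lt_d9; linarith
          have hlog : Real.log (1 / δ) = - Real.log δ := by
            rw [one_div, Real.log_inv]
          have hnn : 0 ≤ (n:ℝ) * σ2 := mul_nonneg (Nat.cast_nonneg n) hσ2nn
          rw [htdef, hlog]
          nlinarith [hnn]
      _ = δ := Real.exp_log hδ
  -- from the tail bound to the conclusion
  have hAmeas : MeasurableSet {ω | S ω < t} := measurableSet_lt hSmeas measurable_const
  have hcompl : {ω | S ω < t}ᶜ = {ω | t ≤ S ω} := by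
    ext ω; simp [not_lt]
  have htail : μ {ω | t ≤ S ω} ≤ ENNReal.ofReal δ :=
    (ENNReal.le_ofReal_iff_toReal_le (measure_ne_top μ _) hδ.le).mpr hcher
  have key : ENNReal.ofReal (1 - δ) ≤ μ {ω | S ω < t} := by
    rw [ENNReal.ofReal_sub 1 hδ.le, ENNReal.ofReal_one]
    rw [tsub_le_iff_right]
    have hone := measure_add_measure_compl (μ := μ) hAmeas
    rw [measure_univ] at hone
    calc (1 : ENNReal) = μ {ω | S ω < t} + μ {ω | S ω < t}ᶜ := hone.symm
      _ ≤ μ {ω | S ω < t} + ENNReal.ofReal δ := by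
          rw [hcompl]; exact add_le_add_right htail _
  refine key.trans (measure_mono ?_)
  intro ω hω
  simp only [Set.mem_setOf_eq] at hω ⊢
  have hS0 : 0 ≤ S ω := Finset.sum_nonneg fun i _ => hY0 i ω
  have hq : 0 ≤ (∑ i ∈ Finset.range n, Z i ω) ^ 2 := sq_nonneg _
  have hn1 : (1:ℝ) ≤ (n:ℝ) - 1 := by
    have : (2:ℝ) ≤ (n:ℝ) := by exact_mod_cast hn
    linarith
  have hnpos : (0:ℝ) < (n:ℝ) := by linarith
  have hc2 : (n:ℝ) / ((n:ℝ) - 1) ≤ 2 := by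
    rw [div_le_iff₀ (by linarith)]; linarith
  have hc0 : 0 ≤ (n:ℝ) / ((n:ℝ) - 1) := div_nonneg hnpos.le (by linarith)
  have hx : (∑ i ∈ Finset.range n, (Z i ω) ^ 2) -
      (1 / (n:ℝ)) * (∑ i ∈ Finset.range n, Z i ω) ^ 2 ≤ S ω := by
    have hpos : 0 ≤ (1 / (n:ℝ)) * (∑ i ∈ Finset.range n, Z i ω) ^ 2 :=
      mul_nonneg (by positivity) hq
    have hSeq : S ω = ∑ i ∈ Finset.range n, (Z i ω) ^ 2 := rfl
    linarith
  have h2S : ((n:ℝ) / ((n:ℝ) - 1)) *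
      ((∑ i ∈ Finset.range n, (Z i ω) ^ 2) -
        (1 / (n:ℝ)) * (∑ i ∈ Finset.range n, Z i ω) ^ 2) ≤ 2 * S ω := by
    nlinarith [mul_le_mul_of_nonneg_left hx hc0, mul_le_mul_of_nonneg_right hc2 hS0]
  have h2t : 2 * S ω ≤ 2 * t := by linarith
  rw [htdef] at h2t
  linarith
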